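/- Let 1 ≤ v_1 ≤ v_2 ≤ n and 0 ≤ r ≤ d, and set p_i = v_1 for i ≤ r and p_i = v_2 for i > r. Then q_n(p_1,...,p_d) = Σ_{i=0}^{r} C(d,i) (v_2 - v_1)^i (n - v_2 + 1)^{d-i}. -/

import Mathlib

/-- The `i`-th smallest entry (with multiplicity) of the tuple `x`. -/
def sortedNth {d : ℕ} (x : Fin d → ℕ) (i : Fin d) : ℕ :=
  x (Tuple.sort x i)

/-- The `d`-tuples with entries in `[n] = {1,…,n}`. -/
def tuples (n d : ℕ) : Finset (Fin d → ℕ) :=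
  Fintype.piFinset fun _ => Finset.Icc 1 n

/-- `q_n(p_1,…,p_d)`: the number of `x ∈ [n]^d` whose `i`-th smallest
entry is at least `p_i` for every `i`. -/
def qn (n d : ℕ) (p : Fin d → ℕ) : ℕ :=
  ((tuples n d).filter fun x => ∀ i, p i ≤ sortedNth x i).card

lemma card_filter_perm {d : ℕ} (σ : Equiv.Perm (Fin d)) (P : Fin d → Prop) [DecidablePred P] :
    (Finset.univ.filter fun i => P (σ i)).card = (Finset.univ.filter P).card := by
  apply Finset.card_bij (fun i _ => σ i)
  · intro a ha; simpa using (Finset.mem_filter.1 ha).2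
  · intro a _ b _ h; exact σ.injective h
  · intro b hb
    exact ⟨σ.symm b, by simpa using (Finset.mem_filter.1 hb).2, by simp⟩

lemma key {d : ℕ} (r v₁ v₂ : ℕ) (h12 : v₁ ≤ v₂) (hr : r ≤ d) (x : Fin d → ℕ) :
    (∀ i : Fin d, (if i.val < r then v₁ else v₂) ≤ sortedNth x i) ↔
      ((∀ j, v₁ ≤ x j) ∧ (Finset.univ.filter fun j => x j < v₂).card ≤ r) := by
  have hcard : (Finset.univ.filter fun j => x j < v₂).card
      = (Finset.univ.filter fun i => sortedNth x i < v₂).card :=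
    (card_filter_perm (Tuple.sort x) (fun j => x j < v₂)).symm
  constructor
  · intro h
    constructor
    · intro j
      have := h ((Tuple.sort x).symm j)
      simp only [sortedNth, Equiv.apply_symm_apply] at this
      split at this
      · exact this
      · exact le_trans h12 this
    · rw [hcard]
      calc (Finset.univ.filter fun i => sortedNth x i < v₂).card
          ≤ (Finset.univ.filter fun i : Fin d => i.val < r).card := by
            apply Finset.card_le_card
            intro i hi
            simp only [Finset.mem_filter, Finset.mem_univ, true_and] at hi ⊢
            by_contra hc
            have := h i
            rw [if_neg hc] at this
            omega
        _ ≤ (Finset.range r).card := by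
            apply Finset.card_le_card_of_injOn (fun i => i.val) ?_ ?_
            · intro i hi
              simp only [Finset.mem_coe, Finset.mem_filter, Finset.mem_univ, true_and] at hi
              exact Finset.mem_range.2 hi
            · intro a _ b _ hab; exact Fin.val_injective hab
        _ = r := Finset.card_range r
  · rintro ⟨h1, h2⟩ i
    split
    · exact h1 _
    · rename_i hc
      by_contra hlt
      push_neg at hlt
      have hsub : Finset.Iic i ⊆ Finset.univ.filter fun j => sortedNth x j < v₂ := by
        intro j hj
        simp only [Finset.mem_Iic] at hj
        simp only [Finset.mem_filter, Finset.mem_univ, true_and]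
        exact lt_of_le_of_lt (Tuple.monotone_sort x hj) hlt
      have := Finset.card_le_card hsub
      rw [Fin.card_Iic] at this
      omega

theorem qn_two_values (n d r v₁ v₂ : ℕ) (hv₁ : 1 ≤ v₁) (h12 : v₁ ≤ v₂)
    (hv₂ : v₂ ≤ n) (hr : r ≤ d) :
    qn n d (fun i => if i.val < r then v₁ else v₂) =
      ∑ i ∈ Finset.range (r + 1),
        d.choose i * (v₂ - v₁) ^ i * (n - v₂ + 1) ^ (d - i) := by
  classical
  set box : Finset (Fin d) → Finset (Fin d → ℕ) := fun S =>
    Fintype.piFinset (fun j => if j ∈ S then Finset.Icc v₁ (v₂ - 1) else Finset.Icc v₂ n)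
    with hbox
  set P : Finset (Finset (Fin d)) :=
    (Finset.univ : Finset (Fin d)).powerset.filter (fun S => S.card ≤ r) with hP
  have hmem : ∀ S x, x ∈ box S ↔
      ∀ j, (j ∈ S → x j ∈ Finset.Icc v₁ (v₂ - 1)) ∧ (j ∉ S → x j ∈ Finset.Icc v₂ n) := by
    intro S x
    rw [hbox, Fintype.mem_piFinset]
    constructor
    · intro h j
      have := h j
      constructor <;> intro hj
      · rwa [if_pos hj] at this
      · rwa [if_neg hj] at this
    · intro h j
      by_cases hj : j ∈ S
      · rw [if_pos hj]; exact (h j).1 hj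
      · rw [if_neg hj]; exact (h j).2 hj
  -- the main set decomposition
  have hdecomp : ((tuples n d).filter fun x =>
      ∀ i, (if i.val < r then v₁ else v₂) ≤ sortedNth x i) = P.biUnion box := by
    ext x
    simp only [Finset.mem_filter, Finset.mem_biUnion]
    rw [key r v₁ v₂ h12 hr x]  -- careful: key applies to the second conjunct
    constructor
    · rintro ⟨hx, h1, h2⟩
      refine ⟨Finset.univ.filter fun j => x j < v₂, ?_, ?_⟩
      · rw [hP, Finset.mem_filter]
        exact ⟨Finset.mem_powerset.2 (Finset.subset_univ _), h2⟩
      · rw [hmem]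
        intro j
        have hxj := (Fintype.mem_piFinset.1 hx) j
        simp only [Finset.mem_Icc] at hxj ⊢
        constructor <;> intro hj <;>
          simp only [Finset.mem_filter, Finset.mem_univ, true_and] at hj
        · exact ⟨h1 j, by omega⟩
        · exact ⟨by omega, hxj.2⟩
    · rintro ⟨S, hS, hxS⟩
      rw [hP, Finset.mem_filter] at hS
      rw [hmem] at hxS
      have hx : ∀ j, v₁ ≤ x j ∧ x j ≤ n := by
        intro j
        rcases hxS j with ⟨ha, hb⟩
        by_cases hj : j ∈ S
        · have := ha hj; simp only [Finset.mem_Icc] at this; omega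
        · have := hb hj; simp only [Finset.mem_Icc] at this; omega
      refine ⟨Fintype.mem_piFinset.2 fun j => Finset.mem_Icc.2 ⟨le_trans hv₁ (hx j).1, (hx j).2⟩,
        fun j => (hx j).1, ?_⟩
      have heq : (Finset.univ.filter fun j => x j < v₂) = S := by
        ext j
        simp only [Finset.mem_filter, Finset.mem_univ, true_and]
        rcases hxS j with ⟨ha, hb⟩
        constructor
        · intro hlt
          by_contra hj
          have := hb hj; simp only [Finset.mem_Icc] at this; omega
        · intro hj
          have := ha hj; simp only [Finset.mem_Icc] at this; omega
      rw [heq]; exact hS.2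
  have hboxcard : ∀ S : Finset (Fin d),
      (box S).card = (v₂ - v₁) ^ S.card * (n - v₂ + 1) ^ (d - S.card) := by
    intro S
    rw [hbox, Fintype.card_piFinset]
    have : ∀ j : Fin d, (if j ∈ S then Finset.Icc v₁ (v₂ - 1) else Finset.Icc v₂ n).card
        = if j ∈ S then v₂ - v₁ else n - v₂ + 1 := by
      intro j
      split <;> rw [Nat.card_Icc] <;> omega
    simp only [this]
    rw [Finset.prod_ite, Finset.prod_const, Finset.prod_const]
    congr 2
    · simp
    · rw [Finset.filter_not, Finset.filter_mem_eq_inter, Finset.univ_inter,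
        ← Finset.compl_eq_univ_sdiff, Finset.card_compl]
      simp
  have hdisj : ∀ S ∈ P, ∀ T ∈ P, S ≠ T → Disjoint (box S) (box T) := by
    intro S _ T _ hST
    rw [Finset.disjoint_left]
    intro x hxS hxT
    apply hST
    ext j
    rw [hmem] at hxS hxT
    rcases hxS j with ⟨ha, hb⟩
    rcases hxT j with ⟨hc, hd⟩
    constructor
    · intro hj
      by_contra hj'
      have h1 := ha hj; have h2 := hd hj'
      simp only [Finset.mem_Icc] at h1 h2; omega
    · intro hj
      by_contra hj'
      have h1 := hc hj; have h2 := hb hj'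
      simp only [Finset.mem_Icc] at h1 h2; omega
  rw [qn, hdecomp, Finset.card_biUnion hdisj]
  have hPsplit : P = (Finset.range (r + 1)).biUnion
      (fun i => Finset.powersetCard i (Finset.univ : Finset (Fin d))) := by
    ext S
    simp only [hP, Finset.mem_filter, Finset.mem_powerset, Finset.mem_biUnion,
      Finset.mem_range, Finset.mem_powersetCard_univ]
    constructor
    · rintro ⟨-, h⟩; exact ⟨S.card, by omega, rfl⟩
    · rintro ⟨i, hi, rfl⟩; exact ⟨Finset.subset_univ _, by omega⟩
  rw [hPsplit, Finset.sum_biUnion]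
  · apply Finset.sum_congr rfl
    intro i _
    have : ∀ S ∈ Finset.powersetCard i (Finset.univ : Finset (Fin d)),
        (box S).card = (v₂ - v₁) ^ i * (n - v₂ + 1) ^ (d - i) := by
      intro S hS
      rw [hboxcard, Finset.mem_powersetCard_univ.1 hS]
    rw [Finset.sum_congr rfl this, Finset.sum_const, Finset.card_powersetCard,
      Finset.card_univ, Fintype.card_fin, smul_eq_mul, mul_assoc]
  · intro i hi j hj hij
    exact Finset.disjoint_coe.1 <| by
      exact_mod_cast (Finset.pairwise_disjoint_powersetCard (Finset.univ : Finset (Fin d)) hij)
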